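/- For any partition λ and any positive integer k, the product of the Schur function s_λ with the elementary symmetric function e_k equals the sum of s_ν over all partitions ν such that ν/λ is a vertical strip with k boxes (Pieri rule for e_k). -/

import Mathlib

open MvPolynomial

/-- The content label of the box added at step `i` of a path. -/
noncomputable def pathLabel (p : ℕ → YoungDiagram) (i : ℕ) : ℤ :=
  ∑ c ∈ (p (i+1)).cells \ (p i).cells, ((c.2 : ℤ) - (c.1 : ℤ))

/-- `p` is a path in Young's lattice from `lam` to `nu` of length `k`,
adding one box at each step (constant equal to `nu` after step `k`). -/
def IsPath (lam nu : YoungDiagram) (k : ℕ) (p : ℕ → YoungDiagram) : Prop :=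
  p 0 = lam ∧ (∀ i, k ≤ i → p i = nu) ∧
    ∀ i < k, p i ≤ p (i+1) ∧ (p (i+1)).card = (p i).card + 1

/-- The labels of steps `a, a+1, …, b-1` form a strictly decreasing sequence. -/
def DecreasingOn (p : ℕ → YoungDiagram) (a b : ℕ) : Prop :=
  ∀ i, a ≤ i → i + 1 < b → pathLabel p (i+1) < pathLabel p i

/-- `nu / lam` is a vertical strip: at most one box in each row. -/
def IsVStrip (lam nu : YoungDiagram) : Prop :=
  lam ≤ nu ∧ ∀ i, nu.rowLen i ≤ lam.rowLen i + 1

/-- `(n,k)`-restricted partition: at most `n` parts and `0 < λ₁ - λ_n ≤ k`. -/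
def Restricted (n k : ℕ) (lam : YoungDiagram) : Prop :=
  lam.colLen 0 ≤ n ∧ 0 < lam.rowLen 0 - lam.rowLen (n-1) ∧
    lam.rowLen 0 - lam.rowLen (n-1) ≤ k

/-- `e_r` for integer index, zero for negative index. -/
noncomputable def Esym (n : ℕ) (r : ℤ) : MvPolynomial (Fin n) ℚ :=
  if 0 ≤ r then esymm (Fin n) ℚ r.toNat else 0

/-- Jacobi–Trudi determinant `det (e_{μ'_i - i + j})` of size `m`. -/
noncomputable def jacobiTrudi (n m : ℕ) (mu : YoungDiagram) : MvPolynomial (Fin n) ℚ :=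
  Matrix.det (Matrix.of fun i j : Fin m =>
    Esym n ((mu.colLen i : ℤ) - (i : ℕ) + (j : ℕ)))

/-- The Schur polynomial in `n` variables, defined via Jacobi–Trudi. -/
noncomputable def schurPoly (n : ℕ) (mu : YoungDiagram) : MvPolynomial (Fin n) ℚ :=
  jacobiTrudi n (mu.rowLen 0) mu

lemma Esym_isSymmetric (n : ℕ) (r : ℤ) : (Esym n r).IsSymmetric := by
  unfold Esym
  split
  · exact esymm_isSymmetric _ _ _
  · exact MvPolynomial.IsSymmetric.zero

lemma jacobiTrudi_isSymmetric (n m : ℕ) (mu : YoungDiagram) :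
    (jacobiTrudi n m mu).IsSymmetric := by
  intro e
  unfold jacobiTrudi
  rw [Matrix.det_apply, map_sum]
  refine Finset.sum_congr rfl fun σ _ => ?_
  rw [Units.smul_def, map_zsmul, map_prod]
  congr 1
  exact Finset.prod_congr rfl fun i _ => Esym_isSymmetric n _ e

lemma schurPoly_isSymmetric (n : ℕ) (mu : YoungDiagram) : (schurPoly n mu).IsSymmetric :=
  jacobiTrudi_isSymmetric n _ mu

/-- The Schur polynomial as an element of the subalgebra of symmetric polynomials. -/
noncomputable def schurSym (n : ℕ) (mu : YoungDiagram) : symmetricSubalgebra (Fin n) ℚ :=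
  ⟨schurPoly n mu, (mem_symmetricSubalgebra _).2 (schurPoly_isSymmetric n mu)⟩

noncomputable def esymmSym (n r : ℕ) : symmetricSubalgebra (Fin n) ℚ :=
  ⟨esymm (Fin n) ℚ r, (mem_symmetricSubalgebra _).2 (esymm_isSymmetric _ _ r)⟩

/-- The single-column partition `(1^r)`. -/
def oneColumn (r : ℕ) : YoungDiagram :=
  (YoungDiagram.ofRowLens [r] (List.sortedGE_iff_pairwise.2 (List.pairwise_singleton _ r))).transpose

/-- The ideal defining the level-`k` fusion algebra for `sl(n)`: generated by the
Schur polynomials `s_λ` with `λ₁ - λ_n = k + 1` (at most `n` parts) together with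
`s_{(1^n)} - 1`. -/
noncomputable def fusionIdeal (n k : ℕ) : Ideal (symmetricSubalgebra (Fin n) ℚ) :=
  Ideal.span ({x | ∃ lam : YoungDiagram, lam.colLen 0 ≤ n ∧
      lam.rowLen 0 - lam.rowLen (n-1) = k + 1 ∧ x = schurSym n lam} ∪
    {schurSym n (oneColumn n) - 1})

/-- The fusion algebra `F^{(n,k)}`. -/
abbrev FusionAlg (n k : ℕ) : Type :=
  symmetricSubalgebra (Fin n) ℚ ⧸ fusionIdeal n k

/-- Image of the Schur function `s_λ` in the fusion algebra. -/
noncomputable def fs (n k : ℕ) (lam : YoungDiagram) : FusionAlg n k :=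
  Ideal.Quotient.mk (fusionIdeal n k) (schurSym n lam)

noncomputable def fe (n k : ℕ) (r : ℕ) : FusionAlg n k :=
  Ideal.Quotient.mk (fusionIdeal n k) (esymmSym n r)


section PieriAux

open Finset

lemma Esym_neg {n : ℕ} {r : ℤ} (h : r < 0) : Esym n r = 0 := by
  unfold Esym; rw [if_neg (by omega)]

lemma Esym_natCast (n k : ℕ) : Esym n (k : ℤ) = esymm (Fin n) ℚ k := by
  unfold Esym; rw [if_pos (Int.natCast_nonneg k), Int.toNat_natCast]

lemma Esym_zero (n : ℕ) : Esym n 0 = 1 := by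
  have := Esym_natCast n 0
  simpa [MvPolynomial.esymm_zero] using this

lemma esymm_eq_zero_of_lt {n k : ℕ} (h : n < k) : esymm (Fin n) ℚ k = 0 := by
  unfold MvPolynomial.esymm
  rw [Finset.powersetCard_eq_empty.2 (by simpa using h), Finset.sum_empty]

lemma Esym_gt {n : ℕ} {r : ℤ} (h : (n : ℤ) < r) : Esym n r = 0 := by
  have h0 : (0:ℤ) ≤ r := by omega
  have : r = ((r.toNat : ℕ) : ℤ) := by omega
  rw [this, Esym_natCast]
  exact esymm_eq_zero_of_lt (by omega)

lemma nat_le_of_lt_imp {a b : ℕ} (h : ∀ i, i < a → i < b) : a ≤ b := by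
  rcases a with _ | a
  · omega
  · exact h a (Nat.lt_succ_self a)

lemma colLen_eq_zero_of {mu : YoungDiagram} {j : ℕ} (h : mu.rowLen 0 ≤ j) : mu.colLen j = 0 := by
  by_contra hc
  have h1 : (0, j) ∈ mu := YoungDiagram.mem_iff_lt_colLen.2 (Nat.pos_of_ne_zero hc)
  have h2 := YoungDiagram.mem_iff_lt_rowLen.1 h1
  omega

lemma youngLE_iff {mu nu : YoungDiagram} : mu ≤ nu ↔ ∀ j, mu.colLen j ≤ nu.colLen j := by
  constructor
  · intro h j
    rcases Nat.eq_zero_or_pos (mu.colLen j) with h0 | h0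
    · omega
    · have h1 : (mu.colLen j - 1, j) ∈ mu := YoungDiagram.mem_iff_lt_colLen.2 (by omega)
      have h2 := YoungDiagram.mem_iff_lt_colLen.1
        (YoungDiagram.cells_subset_iff.2 h (YoungDiagram.mem_cells _ |>.2 h1))
      omega
  · intro h
    rw [← YoungDiagram.cells_subset_iff]
    intro c hc
    obtain ⟨i, j⟩ := c
    rw [YoungDiagram.mem_cells] at *
    have := YoungDiagram.mem_iff_lt_colLen.1 hc
    exact YoungDiagram.mem_iff_lt_colLen.2 (lt_of_lt_of_le this (h j))

lemma youngExt {mu nu : YoungDiagram} (h : ∀ j, mu.colLen j = nu.colLen j) : mu = nu :=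
  le_antisymm (youngLE_iff.2 fun j => (h j).le) (youngLE_iff.2 fun j => (h j).ge)

lemma isVStrip_iff {lam nu : YoungDiagram} :
    IsVStrip lam nu ↔ (∀ j, lam.colLen j ≤ nu.colLen j) ∧
      ∀ j, nu.colLen (j + 1) ≤ lam.colLen j := by
  constructor
  · rintro ⟨hle, hrow⟩
    refine ⟨youngLE_iff.1 hle, fun j => ?_⟩
    rcases Nat.eq_zero_or_pos (nu.colLen (j+1)) with h0 | h0
    · omega
    · have h1 : (nu.colLen (j+1) - 1, j + 1) ∈ nu :=
        YoungDiagram.mem_iff_lt_colLen.2 (by omega)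
      have h2 := YoungDiagram.mem_iff_lt_rowLen.1 h1
      have h3 := hrow (nu.colLen (j+1) - 1)
      have h4 : (nu.colLen (j+1) - 1, j) ∈ lam :=
        YoungDiagram.mem_iff_lt_rowLen.2 (by omega)
      have h5 := YoungDiagram.mem_iff_lt_colLen.1 h4
      omega
  · rintro ⟨h1, h2⟩
    refine ⟨youngLE_iff.2 h1, fun i => ?_⟩
    by_contra hc
    push_neg at hc
    have m1 : (i, lam.rowLen i + 1) ∈ nu := YoungDiagram.mem_iff_lt_rowLen.2 (by omega)
    have m2 := YoungDiagram.mem_iff_lt_colLen.1 m1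
    have m3 : (i, lam.rowLen i) ∈ lam :=
      YoungDiagram.mem_iff_lt_colLen.2 (lt_of_lt_of_le m2 (h2 _))
    have m4 := YoungDiagram.mem_iff_lt_rowLen.1 m3
    omega

lemma young_card_eq {mu : YoungDiagram} {M : ℕ} (h : mu.rowLen 0 ≤ M) :
    mu.card = ∑ j ∈ Finset.range M, mu.colLen j := by
  have hmem : ∀ c ∈ mu.cells, (fun c : ℕ × ℕ => c.2) c ∈ Finset.range M := by
    intro c hc
    rw [YoungDiagram.mem_cells] at hc
    obtain ⟨i, j⟩ := c
    have h1 := YoungDiagram.mem_iff_lt_rowLen.1 hc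
    have h2 := mu.rowLen_anti 0 i (Nat.zero_le i)
    simp only [Finset.mem_range]
    omega
  have : mu.card = mu.cells.card := rfl
  rw [this, Finset.card_eq_sum_card_fiberwise hmem]
  refine Finset.sum_congr rfl fun j _ => ?_
  rw [mu.colLen_eq_card]
  congr 1

end PieriAux
section PieriAux2

open Finset

/-- Young diagram from an antitone, eventually-zero column-length function. -/
def ofColLens (g : ℕ → ℕ) (hg : Antitone g) (M : ℕ) (hM : g M = 0) : YoungDiagram where
  cells := (Finset.range (g 0) ×ˢ Finset.range M).filter fun c => c.1 < g c.2
  isLowerSet := by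
    rintro ⟨i, j⟩ ⟨i', j'⟩ ⟨hi, hj⟩ hm
    simp only [Finset.coe_filter, Set.mem_setOf_eq, Finset.mem_product,
      Finset.mem_range] at *
    have := hg hj
    refine ⟨⟨?_, ?_⟩, ?_⟩ <;> omega

lemma mem_ofColLens {g : ℕ → ℕ} {hg : Antitone g} {M : ℕ} {hM : g M = 0} {i j : ℕ} :
    (i, j) ∈ ofColLens g hg M hM ↔ i < g j := by
  show (i, j) ∈ Finset.filter _ _ ↔ _
  simp only [Finset.mem_filter, Finset.mem_product, Finset.mem_range]
  constructor
  · tauto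
  · intro h
    have h1 : i < g 0 := lt_of_lt_of_le h (hg (Nat.zero_le j))
    have h2 : j < M := by
      by_contra hc
      have := hg (le_of_not_gt hc)
      omega
    tauto

lemma colLen_ofColLens {g : ℕ → ℕ} {hg : Antitone g} {M : ℕ} {hM : g M = 0} {j : ℕ} :
    (ofColLens g hg M hM).colLen j = g j := by
  refine Nat.le_antisymm (nat_le_of_lt_imp fun i hi => ?_) (nat_le_of_lt_imp fun i hi => ?_)
  · exact mem_ofColLens.1 (YoungDiagram.mem_iff_lt_colLen.2 hi)
  · exact YoungDiagram.mem_iff_lt_colLen.1 (mem_ofColLens.2 hi)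

lemma rowLen_ofColLens_le {g : ℕ → ℕ} {hg : Antitone g} {M : ℕ} {hM : g M = 0} :
    (ofColLens g hg M hM).rowLen 0 ≤ M := by
  by_contra hc
  have h1 : (0, M) ∈ ofColLens g hg M hM := YoungDiagram.mem_iff_lt_rowLen.2 (by omega)
  have := mem_ofColLens.1 h1
  omega

/-- Expansion of a determinant whose last row is concentrated in the last column. -/
lemma det_last_row {S : Type*} [CommRing S] {M : ℕ} (A : Matrix (Fin (M+1)) (Fin (M+1)) S)
    (h : ∀ j : Fin (M+1), (j : ℕ) < M → A (Fin.last M) j = 0) :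
    A.det = A (Fin.last M) (Fin.last M) *
      (A.submatrix Fin.castSucc Fin.castSucc).det := by
  rw [Matrix.det_succ_row A (Fin.last M)]
  rw [Finset.sum_eq_single (Fin.last M)]
  · rw [Fin.succAbove_last, Fin.val_last]
    have : ((-1 : S)) ^ (M + M) = 1 := by
      rw [← two_mul, pow_mul]
      norm_num
    rw [this, one_mul]
  · intro j _ hj
    have hjM : (j : ℕ) < M := by
      have := j.isLt
      have : (j : ℕ) ≠ M := fun hc => hj (Fin.ext (by simp [hc, Fin.val_last]))
      omega
    rw [h j hjM]
    ring
  · simp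

lemma jacobiTrudi_succ (n : ℕ) {M : ℕ} (mu : YoungDiagram) (h : mu.rowLen 0 ≤ M) :
    jacobiTrudi n (M + 1) mu = jacobiTrudi n M mu := by
  unfold jacobiTrudi
  rw [det_last_row]
  · have h0 : mu.colLen M = 0 := colLen_eq_zero_of h
    have h1 : Esym n ((mu.colLen (Fin.last M) : ℤ) - ((Fin.last M : Fin (M+1)) : ℕ) +
        ((Fin.last M : Fin (M+1)) : ℕ)) = 1 := by
      simp only [Fin.val_last, h0]
      norm_num [Esym_zero]
    simp only [Matrix.of_apply] at h1 ⊢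
    rw [h1, one_mul]
    congr 1
  · intro j hj
    simp only [Matrix.of_apply, Fin.val_last, colLen_eq_zero_of h]
    exact Esym_neg (by omega)

lemma jacobiTrudi_eq_schurPoly (n : ℕ) {M : ℕ} (mu : YoungDiagram) (h : mu.rowLen 0 ≤ M) :
    jacobiTrudi n M mu = schurPoly n mu := by
  induction M, h using Nat.le_induction with
  | base => rfl
  | succ M hM ih => rw [jacobiTrudi_succ n mu hM, ih]

lemma schurPoly_eq_zero {n : ℕ} {mu : YoungDiagram} (h : n < mu.colLen 0) :
    schurPoly n mu = 0 := by
  have hm : 0 < mu.rowLen 0 := by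
    by_contra hc
    have := colLen_eq_zero_of (mu := mu) (j := 0) (by omega)
    omega
  unfold schurPoly jacobiTrudi
  apply Matrix.det_eq_zero_of_row_eq_zero ⟨0, hm⟩
  intro j
  simp only [Matrix.of_apply]
  apply Esym_gt
  have hc : (n : ℤ) < (mu.colLen 0 : ℤ) := by exact_mod_cast h
  have hj : (0:ℤ) ≤ ((j : ℕ) : ℤ) := Int.natCast_nonneg _
  push_cast
  omega

end PieriAux2
namespace Pieri

open Finset Polynomial

variable (n : ℕ) (lam : YoungDiagram)

def Nbig : ℕ := n + lam.rowLen 0 + 1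

def hiF (i : ℕ) : ℕ := if i = 0 then Nbig n lam else lam.colLen (i - 1)

noncomputable def Sfun (i j : ℕ) : Polynomial (MvPolynomial (Fin n) ℚ) :=
  ∑ d ∈ Finset.range (Nbig n lam + 1 - lam.colLen i),
    Polynomial.C (Esym n ((lam.colLen i : ℤ) + d - i + j)) * Polynomial.X ^ d

noncomputable def Bfun (i j : ℕ) : Polynomial (MvPolynomial (Fin n) ℚ) :=
  ∑ d ∈ Finset.range (hiF n lam i + 1 - lam.colLen i),
    Polynomial.C (Esym n ((lam.colLen i : ℤ) + d - i + j)) * Polynomial.X ^ d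

noncomputable def Epoly : Polynomial (MvPolynomial (Fin n) ℚ) :=
  ∑ d ∈ Finset.range (Nbig n lam + 1),
    Polynomial.C (esymm (Fin n) ℚ d) * Polynomial.X ^ d

lemma B0 (j : ℕ) : Bfun n lam 0 j = Sfun n lam 0 j := by
  simp [Bfun, Sfun, hiF]

/-- Extend the `Sfun` sum by one extra (vanishing) top term. -/
lemma Sfun_ext (hle : lam.colLen 0 ≤ n) {i : ℕ} (h2 : i ≤ lam.rowLen 0) (j : ℕ) :
    Sfun n lam i j = ∑ d ∈ Finset.range (Nbig n lam + 2 - lam.colLen i),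
      Polynomial.C (Esym n ((lam.colLen i : ℤ) + d - i + j)) * Polynomial.X ^ d := by
  have hci : lam.colLen i ≤ n := le_trans (lam.colLen_anti 0 i (Nat.zero_le i)) hle
  have hN : n + lam.rowLen 0 + 1 = Nbig n lam := rfl
  have h3 : Nbig n lam + 2 - lam.colLen i = (Nbig n lam + 1 - lam.colLen i) + 1 := by omega
  rw [h3, Finset.sum_range_succ]
  have hz : Esym n ((lam.colLen i : ℤ) + (Nbig n lam + 1 - lam.colLen i : ℕ) - i + j) = 0 := by
    apply Esym_gt
    have hcast : ((Nbig n lam + 1 - lam.colLen i : ℕ) : ℤ)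
        = (Nbig n lam : ℤ) + 1 - lam.colLen i := by
      push_cast [Nat.cast_sub (by omega : lam.colLen i ≤ Nbig n lam + 1)]
      ring
    rw [hcast]
    have : (Nbig n lam : ℤ) = (n : ℤ) + lam.rowLen 0 + 1 := by
      rw [← hN]; push_cast; ring
    have hj : (0:ℤ) ≤ (j:ℤ) := Int.natCast_nonneg _
    have hi : (i:ℤ) ≤ (lam.rowLen 0 : ℤ) := by exact_mod_cast h2
    omega
  rw [hz]
  simp only [map_zero, zero_mul, add_zero]
  rfl

lemma lo_le_hi (hle : lam.colLen 0 ≤ n) (i : ℕ) : lam.colLen i ≤ hiF n lam i := by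
  unfold hiF
  split
  · next h => subst h; have : Nbig n lam = n + lam.rowLen 0 + 1 := rfl; omega
  · next h => exact lam.colLen_anti (i-1) i (by omega)

lemma hi_le_N (hle : lam.colLen 0 ≤ n) (i : ℕ) : hiF n lam i ≤ Nbig n lam := by
  unfold hiF
  have : Nbig n lam = n + lam.rowLen 0 + 1 := rfl
  split
  · omega
  · have := lam.colLen_anti 0 (i-1) (Nat.zero_le _); omega

lemma E1 (hle : lam.colLen 0 ≤ n) {i : ℕ} (h1 : 1 ≤ i) (h2 : i ≤ lam.rowLen 0) (j : ℕ) :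
    Bfun n lam i j = Sfun n lam i j
      - Polynomial.X ^ (lam.colLen (i-1) + 1 - lam.colLen i) * Sfun n lam (i-1) j := by
  have hb : lam.colLen (i-1) ≤ n := le_trans (lam.colLen_anti 0 (i-1) (Nat.zero_le _)) hle
  have hcb : lam.colLen i ≤ lam.colLen (i-1) := lam.colLen_anti (i-1) i (by omega)
  have hN : Nbig n lam = n + lam.rowLen 0 + 1 := rfl
  set f : ℕ → Polynomial (MvPolynomial (Fin n) ℚ) :=
    fun d => Polynomial.C (Esym n ((lam.colLen i : ℤ) + d - i + j)) * Polynomial.X ^ d with hf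
  have hsplit : Sfun n lam i j
      = (∑ d ∈ Finset.range (lam.colLen (i-1) + 1 - lam.colLen i), f d)
        + ∑ d ∈ Finset.Ico (lam.colLen (i-1) + 1 - lam.colLen i)
            (Nbig n lam + 2 - lam.colLen i), f d := by
    rw [Sfun_ext n lam hle h2 j]
    rw [Finset.sum_range_add_sum_Ico f (by omega)]
  have hB : Bfun n lam i j
      = ∑ d ∈ Finset.range (lam.colLen (i-1) + 1 - lam.colLen i), f d := by
    unfold Bfun hiF
    rw [if_neg (by omega : ¬ i = 0)]
  have hIco : ∑ d ∈ Finset.Ico (lam.colLen (i-1) + 1 - lam.colLen i)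
        (Nbig n lam + 2 - lam.colLen i), f d
      = Polynomial.X ^ (lam.colLen (i-1) + 1 - lam.colLen i) * Sfun n lam (i-1) j := by
    rw [Finset.sum_Ico_eq_sum_range]
    unfold Sfun
    rw [Finset.mul_sum]
    have hrange : Nbig n lam + 2 - lam.colLen i - (lam.colLen (i-1) + 1 - lam.colLen i)
        = Nbig n lam + 1 - lam.colLen (i-1) := by omega
    rw [hrange]
    refine Finset.sum_congr rfl fun d _ => ?_
    have hidx : (lam.colLen i : ℤ) + ((lam.colLen (i-1) + 1 - lam.colLen i + d : ℕ) : ℤ) - i + j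
        = (lam.colLen (i-1) : ℤ) + d - ((i-1 : ℕ) : ℤ) + j := by omega
    rw [hf]
    simp only []
    rw [hidx, pow_add]
    ring
  rw [hB, hsplit, hIco]
  ring

lemma E2 (hle : lam.colLen 0 ≤ n) {i : ℕ} (h2 : i ≤ lam.rowLen 0) (j : ℕ) :
    Sfun n lam i j = Polynomial.C (Esym n ((lam.colLen i : ℤ) - i + j))
      + Polynomial.X * Sfun n lam i (j+1) := by
  have hci : lam.colLen i ≤ n := le_trans (lam.colLen_anti 0 i (Nat.zero_le i)) hle
  have hN : Nbig n lam = n + lam.rowLen 0 + 1 := rfl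
  set f : ℕ → Polynomial (MvPolynomial (Fin n) ℚ) :=
    fun d => Polynomial.C (Esym n ((lam.colLen i : ℤ) + d - i + j)) * Polynomial.X ^ d with hf
  have hsplit : Sfun n lam i j = (∑ d ∈ Finset.range 1, f d)
      + ∑ d ∈ Finset.Ico 1 (Nbig n lam + 2 - lam.colLen i), f d := by
    rw [Sfun_ext n lam hle h2 j]
    rw [Finset.sum_range_add_sum_Ico f (by omega)]
  have hone : ∑ d ∈ Finset.range 1, f d = Polynomial.C (Esym n ((lam.colLen i : ℤ) - i + j)) := by
    rw [Finset.sum_range_one, hf]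
    simp only []
    norm_num
  have hIco : ∑ d ∈ Finset.Ico 1 (Nbig n lam + 2 - lam.colLen i), f d
      = Polynomial.X * Sfun n lam i (j+1) := by
    rw [Finset.sum_Ico_eq_sum_range]
    unfold Sfun
    rw [Finset.mul_sum]
    have hrange : Nbig n lam + 2 - lam.colLen i - 1 = Nbig n lam + 1 - lam.colLen i := by omega
    rw [hrange]
    refine Finset.sum_congr rfl fun d _ => ?_
    have hidx : (lam.colLen i : ℤ) + ((1 + d : ℕ) : ℤ) - i + j
        = (lam.colLen i : ℤ) + d - i + ((j + 1 : ℕ) : ℤ) := by omega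
    rw [hf]
    simp only []
    rw [hidx, pow_add]
    ring
  rw [hsplit, hone, hIco]

lemma E3 : Sfun n lam (lam.rowLen 0) (lam.rowLen 0) = Epoly n lam := by
  unfold Sfun Epoly
  have h0 : lam.colLen (lam.rowLen 0) = 0 := colLen_eq_zero_of le_rfl
  rw [h0]
  refine Finset.sum_congr (by norm_num) fun d _ => ?_
  congr 1
  have hidx : ((0:ℕ) : ℤ) + d - lam.rowLen 0 + lam.rowLen 0 = ((d : ℕ) : ℤ) := by
    push_cast; ring
  rw [hidx, Esym_natCast]

end Pieri
namespace Pieri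

open Finset Polynomial

variable (n : ℕ) (lam : YoungDiagram)

noncomputable def Smat : Matrix (Fin (lam.rowLen 0 + 1)) (Fin (lam.rowLen 0 + 1))
    (Polynomial (MvPolynomial (Fin n) ℚ)) :=
  Matrix.of fun i j => Sfun n lam i j

noncomputable def Bmat : Matrix (Fin (lam.rowLen 0 + 1)) (Fin (lam.rowLen 0 + 1))
    (Polynomial (MvPolynomial (Fin n) ℚ)) :=
  Matrix.of fun i j => Bfun n lam i j

noncomputable def Lmat : Matrix (Fin (lam.rowLen 0 + 1)) (Fin (lam.rowLen 0 + 1))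
    (Polynomial (MvPolynomial (Fin n) ℚ)) :=
  Matrix.of fun i l =>
    (if l = i then 1 else 0)
      - (if (l : ℕ) + 1 = (i : ℕ) then
          Polynomial.X ^ (lam.colLen ((i : ℕ) - 1) + 1 - lam.colLen i) else 0)

noncomputable def Umat : Matrix (Fin (lam.rowLen 0 + 1)) (Fin (lam.rowLen 0 + 1))
    (Polynomial (MvPolynomial (Fin n) ℚ)) :=
  Matrix.of fun l j =>
    (if l = j then 1 else 0) - (if (l : ℕ) = (j : ℕ) + 1 then Polynomial.X else 0)

noncomputable def Tmat : Matrix (Fin (lam.rowLen 0 + 1)) (Fin (lam.rowLen 0 + 1))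
    (Polynomial (MvPolynomial (Fin n) ℚ)) :=
  Matrix.of fun i j =>
    if (j : ℕ) < lam.rowLen 0 then Polynomial.C (Esym n ((lam.colLen i : ℤ) - i + j))
    else Sfun n lam i j

lemma det_map_C {m : ℕ} (f : Fin m → Fin m → MvPolynomial (Fin n) ℚ) :
    (Matrix.of fun i j => Polynomial.C (f i j)).det = Polynomial.C (Matrix.of f).det := by
  have h := RingHom.map_det
    (Polynomial.C : MvPolynomial (Fin n) ℚ →+* Polynomial (MvPolynomial (Fin n) ℚ))
    (Matrix.of f)
  exact h.symm

lemma detL : (Lmat n lam).det = 1 := by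
  have htri : (Lmat n lam).BlockTriangular OrderDual.toDual := by
    intro i j hij
    rw [OrderDual.toDual_lt_toDual] at hij
    have hvij : (i : ℕ) < (j : ℕ) := hij
    have h1 : ¬ (j = i) := by intro h; subst h; exact lt_irrefl _ hvij
    have h2 : ¬ ((j : ℕ) + 1 = (i : ℕ)) := by omega
    simp only [Lmat, Matrix.of_apply, if_neg h1, if_neg h2, sub_zero]
  rw [Matrix.det_of_lowerTriangular _ htri]
  refine Finset.prod_eq_one fun i _ => ?_
  have h2 : ¬ ((i : ℕ) + 1 = (i : ℕ)) := by omega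
  simp [Lmat, h2]

lemma detU : (Umat n lam).det = 1 := by
  have htri : (Umat n lam).BlockTriangular OrderDual.toDual := by
    intro i j hij
    rw [OrderDual.toDual_lt_toDual] at hij
    have hvij : (i : ℕ) < (j : ℕ) := hij
    have h1 : ¬ (i = j) := by intro h; subst h; exact lt_irrefl _ hvij
    have h2 : ¬ ((i : ℕ) = (j : ℕ) + 1) := by omega
    simp only [Umat, Matrix.of_apply, if_neg h1, if_neg h2, sub_zero]
  rw [Matrix.det_of_lowerTriangular _ htri]
  refine Finset.prod_eq_one fun i _ => ?_
  have h2 : ¬ ((i : ℕ) = (i : ℕ) + 1) := by omega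
  simp [Umat, h2]

lemma BLS (hle : lam.colLen 0 ≤ n) : Bmat n lam = Lmat n lam * Smat n lam := by
  refine Matrix.ext fun i j => ?_
  rw [Matrix.mul_apply]
  simp only [Lmat, Smat, Bmat, Matrix.of_apply]
  simp only [sub_mul, Finset.sum_sub_distrib, ite_mul, one_mul, zero_mul,
    Finset.sum_ite_eq']
  rw [if_pos (Finset.mem_univ i)]
  by_cases hi0 : (i : ℕ) = 0
  · rw [Finset.sum_eq_zero, sub_zero, hi0, B0]
    intro l _
    rw [if_neg (show ¬ ((l : ℕ) + 1 = (i : ℕ)) by omega)]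
  · have hi1 : 1 ≤ (i : ℕ) := by omega
    have hilt : (i : ℕ) - 1 < lam.rowLen 0 + 1 := by
      have := i.isLt; omega
    rw [Finset.sum_eq_single (⟨(i : ℕ) - 1, hilt⟩ : Fin (lam.rowLen 0 + 1))]
    · rw [if_pos (show ((⟨(i : ℕ) - 1, hilt⟩ : Fin (lam.rowLen 0 + 1)) : ℕ) + 1 = (i : ℕ)
        by simp; omega)]
      have h2 : (i : ℕ) ≤ lam.rowLen 0 := by have := i.isLt; omega
      have hval : ((⟨(i : ℕ) - 1, hilt⟩ : Fin (lam.rowLen 0 + 1)) : ℕ) = (i : ℕ) - 1 := rfl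
      rw [hval, E1 n lam hle hi1 h2 j]
    · intro l _ hl
      rw [if_neg]
      intro hc
      exact hl (Fin.ext (by simp; omega))
    · intro h
      exact absurd (Finset.mem_univ _) h

lemma SUT (hle : lam.colLen 0 ≤ n) : Smat n lam * Umat n lam = Tmat n lam := by
  refine Matrix.ext fun i j => ?_
  rw [Matrix.mul_apply]
  simp only [Smat, Umat, Tmat, Matrix.of_apply]
  simp only [mul_sub, Finset.sum_sub_distrib, mul_ite, mul_one, mul_zero,
    Finset.sum_ite_eq']
  rw [if_pos (Finset.mem_univ j)]
  have h2 : (i : ℕ) ≤ lam.rowLen 0 := by have := i.isLt; omega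
  by_cases hj : (j : ℕ) < lam.rowLen 0
  · have hjlt : (j : ℕ) + 1 < lam.rowLen 0 + 1 := by omega
    rw [Finset.sum_eq_single (⟨(j : ℕ) + 1, hjlt⟩ : Fin (lam.rowLen 0 + 1))]
    · rw [if_pos (show ((⟨(j : ℕ) + 1, hjlt⟩ : Fin (lam.rowLen 0 + 1)) : ℕ) = (j : ℕ) + 1
        from rfl)]
      have hval : ((⟨(j : ℕ) + 1, hjlt⟩ : Fin (lam.rowLen 0 + 1)) : ℕ) = (j : ℕ) + 1 := rfl
      rw [hval, if_pos hj, E2 n lam hle h2 j]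
      push_cast
      ring
    · intro l _ hl
      rw [if_neg]
      intro hc
      exact hl (Fin.ext (by simp; omega))
    · intro h
      exact absurd (Finset.mem_univ _) h
  · rw [Finset.sum_eq_zero, sub_zero, if_neg hj]
    intro l _
    rw [if_neg (show ¬ ((l : ℕ) = (j : ℕ) + 1) by have := l.isLt; omega)]

lemma detT (hle : lam.colLen 0 ≤ n) :
    (Tmat n lam).det = Epoly n lam * Polynomial.C (schurPoly n lam) := by
  have hzero : ∀ j : Fin (lam.rowLen 0 + 1), (j : ℕ) < lam.rowLen 0 →
      (Tmat n lam) (Fin.last _) j = 0 := by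
    intro j hj
    simp only [Tmat, Matrix.of_apply, Fin.val_last]
    rw [if_pos hj, colLen_eq_zero_of (le_refl (lam.rowLen 0))]
    rw [show Esym n (((0:ℕ) : ℤ) - (lam.rowLen 0 : ℕ) + (j : ℕ)) = 0 from Esym_neg (by omega),
      map_zero]
  rw [det_last_row _ hzero]
  have hll : (Tmat n lam) (Fin.last _) (Fin.last _) = Epoly n lam := by
    simp only [Tmat, Matrix.of_apply, Fin.val_last]
    rw [if_neg (lt_irrefl _), E3]
  rw [hll]
  congr 1
  have hsub : (Tmat n lam).submatrix Fin.castSucc Fin.castSucc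
      = Matrix.of fun i j : Fin (lam.rowLen 0) =>
          Polynomial.C (Esym n ((lam.colLen i : ℤ) - (i : ℕ) + (j : ℕ))) := by
    refine Matrix.ext fun i j => ?_
    simp only [Matrix.submatrix_apply, Tmat, Matrix.of_apply, Fin.coe_castSucc]
    rw [if_pos j.isLt]
  rw [hsub, det_map_C]
  rfl

lemma detB_expand :
    (Bmat n lam).det =
      ∑ r ∈ Fintype.piFinset (fun i : Fin (lam.rowLen 0 + 1) =>
          Finset.range (hiF n lam i + 1 - lam.colLen i)),
        Polynomial.X ^ (∑ i, r i) * Polynomial.C (Matrix.det (Matrix.of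
          fun i j : Fin (lam.rowLen 0 + 1) =>
            Esym n ((lam.colLen i : ℤ) + r i - (i : ℕ) + (j : ℕ)))) := by
  classical
  set g : Fin (lam.rowLen 0 + 1) → ℕ → (Fin (lam.rowLen 0 + 1) →
      Polynomial (MvPolynomial (Fin n) ℚ)) :=
    fun i d => fun j => Polynomial.C (Esym n ((lam.colLen i : ℤ) + d - i + j))
      * Polynomial.X ^ d with hg
  have hrows : Bmat n lam = fun i : Fin (lam.rowLen 0 + 1) =>
      ∑ d ∈ Finset.range (hiF n lam i + 1 - lam.colLen i), g i d := by
    funext i j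
    rw [Finset.sum_apply]
    rfl
  have expand := (Matrix.detRowAlternating (R := Polynomial (MvPolynomial (Fin n) ℚ))
      (n := Fin (lam.rowLen 0 + 1))).toMultilinearMap.map_sum_finset
    (A := fun i => Finset.range (hiF n lam i + 1 - lam.colLen i)) (g := g)
  have hBdet : (Bmat n lam).det
      = ∑ r ∈ Fintype.piFinset (fun i : Fin (lam.rowLen 0 + 1) =>
          Finset.range (hiF n lam i + 1 - lam.colLen i)),
        Matrix.det (fun i => g i (r i)) := by
    show Matrix.detRowAlternating (Bmat n lam) = _
    rw [hrows]
    exact expand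
  rw [hBdet]
  refine Finset.sum_congr rfl fun r _ => ?_
  have hmat : (fun i => g i (r i)) = Matrix.of (fun i j : Fin (lam.rowLen 0 + 1) =>
      (fun i' : Fin (lam.rowLen 0 + 1) => Polynomial.X ^ (r i')) i *
      (Matrix.of fun i' j' : Fin (lam.rowLen 0 + 1) =>
        Polynomial.C (Esym n ((lam.colLen i' : ℤ) + r i' - i' + j'))) i j) := by
    funext i j
    simp only [hg, Matrix.of_apply]
    ring
  rw [hmat, Matrix.det_mul_column, det_map_C, Finset.prod_pow_eq_pow_sum]

lemma key (hle : lam.colLen 0 ≤ n) (k : ℕ) :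
    esymm (Fin n) ℚ k * schurPoly n lam =
      ∑ r ∈ (Fintype.piFinset (fun i : Fin (lam.rowLen 0 + 1) =>
          Finset.range (hiF n lam i + 1 - lam.colLen i))).filter
            (fun r => (∑ i, r i) = k),
        Matrix.det (Matrix.of fun i j : Fin (lam.rowLen 0 + 1) =>
          Esym n ((lam.colLen i : ℤ) + r i - (i : ℕ) + (j : ℕ))) := by
  classical
  have hdet : (Bmat n lam).det = Epoly n lam * Polynomial.C (schurPoly n lam) := by
    rw [BLS n lam hle, Matrix.det_mul, detL, one_mul, ← detT n lam hle, ← SUT n lam hle,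
      Matrix.det_mul, detU, mul_one]
  rw [detB_expand] at hdet
  have hcoeff := congrArg (fun p => Polynomial.coeff p k) hdet
  simp only [Polynomial.finset_sum_coeff] at hcoeff
  have hL : ∀ r : Fin (lam.rowLen 0 + 1) → ℕ,
      Polynomial.coeff (Polynomial.X ^ (∑ i, r i) * Polynomial.C (Matrix.det (Matrix.of
        fun i j : Fin (lam.rowLen 0 + 1) =>
          Esym n ((lam.colLen i : ℤ) + r i - (i : ℕ) + (j : ℕ))))) k
      = if (∑ i, r i) = k then Matrix.det (Matrix.of
          fun i j : Fin (lam.rowLen 0 + 1) =>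
            Esym n ((lam.colLen i : ℤ) + r i - (i : ℕ) + (j : ℕ))) else 0 := by
    intro r
    rw [Polynomial.coeff_mul_C, Polynomial.coeff_X_pow]
    by_cases h : (∑ i, r i) = k
    · rw [if_pos h, if_pos h.symm, one_mul]
    · rw [if_neg h, if_neg (fun hc => h hc.symm), zero_mul]
  simp only [hL] at hcoeff
  have hR : Polynomial.coeff (Epoly n lam * Polynomial.C (schurPoly n lam)) k
      = esymm (Fin n) ℚ k * schurPoly n lam := by
    rw [Polynomial.coeff_mul_C]
    congr 1
    unfold Epoly
    rw [Polynomial.finset_sum_coeff]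
    simp only [Polynomial.coeff_C_mul, Polynomial.coeff_X_pow, mul_ite, mul_one, mul_zero]
    rw [Finset.sum_ite_eq (Finset.range (Nbig n lam + 1)) k (fun d => esymm (Fin n) ℚ d)]
    by_cases hk : k ∈ Finset.range (Nbig n lam + 1)
    · rw [if_pos hk]
    · rw [if_neg hk]
      have hN : Nbig n lam = n + lam.rowLen 0 + 1 := rfl
      rw [esymm_eq_zero_of_lt (by simp only [Finset.mem_range] at hk; omega)]
  rw [Finset.sum_filter, hcoeff, hR]

end Pieri
section PieriFinal

open Finset

lemma colLen_le_card (nu : YoungDiagram) (j : ℕ) : nu.colLen j ≤ nu.card := by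
  rw [nu.colLen_eq_card]
  exact Finset.card_le_card (by
    intro c hc
    rw [YoungDiagram.mem_col_iff] at hc
    exact (YoungDiagram.mem_cells _).2 hc.1)

lemma rowLen_le_card (nu : YoungDiagram) (i : ℕ) : nu.rowLen i ≤ nu.card := by
  rw [nu.rowLen_eq_card]
  exact Finset.card_le_card (by
    intro c hc
    rw [YoungDiagram.mem_row_iff] at hc
    exact (YoungDiagram.mem_cells _).2 hc.1)

lemma cells_injective : Function.Injective (fun nu : YoungDiagram => nu.cells) := by
  intro a b h
  cases a; cases b; simpa using h

lemma vstrip_finite (lam : YoungDiagram) (k : ℕ) :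
    {nu : YoungDiagram | IsVStrip lam nu ∧ nu.card = lam.card + k}.Finite := by
  classical
  set c := lam.card + k + 1 with hc
  have hsub : {nu : YoungDiagram | IsVStrip lam nu ∧ nu.card = lam.card + k}
      ⊆ (fun nu : YoungDiagram => nu.cells) ⁻¹'
        ((Finset.range c ×ˢ Finset.range c).powerset : Finset (Finset (ℕ × ℕ))) := by
    rintro nu ⟨_, hcard⟩
    rw [Set.mem_preimage, Finset.mem_coe, Finset.mem_powerset]
    intro x hx
    obtain ⟨i, j⟩ := x
    have hmem : (i, j) ∈ nu := (YoungDiagram.mem_cells _).1 hx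
    have h1 : i < nu.colLen j := YoungDiagram.mem_iff_lt_colLen.1 hmem
    have h2 : j < nu.rowLen i := YoungDiagram.mem_iff_lt_rowLen.1 hmem
    have h3 := colLen_le_card nu j
    have h4 := rowLen_le_card nu i
    simp only [Finset.mem_product, Finset.mem_range]
    omega
  refine Set.Finite.subset (Set.Finite.preimage (Function.Injective.injOn cells_injective) ?_)
    hsub
  exact (Finset.range c ×ˢ Finset.range c).powerset.finite_toSet

end PieriFinal
section PieriBij

open Finset

/-- Candidate column lengths built from an offset vector `r`. -/
def gfun (lam : YoungDiagram) (r : Fin (lam.rowLen 0 + 1) → ℕ) (j : ℕ) : ℕ :=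
  if h : j < lam.rowLen 0 + 1 then lam.colLen j + r ⟨j, h⟩ else 0

lemma gfun_zero (lam : YoungDiagram) (r : Fin (lam.rowLen 0 + 1) → ℕ) :
    gfun lam r (lam.rowLen 0 + 1) = 0 := by
  simp [gfun]

lemma gfun_anti (n : ℕ) (lam : YoungDiagram) (hle : lam.colLen 0 ≤ n)
    {r : Fin (lam.rowLen 0 + 1) → ℕ}
    (hr : ∀ i : Fin (lam.rowLen 0 + 1), r i < Pieri.hiF n lam i + 1 - lam.colLen i) :
    Antitone (gfun lam r) := by
  apply antitone_nat_of_succ_le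
  intro j
  unfold gfun
  by_cases h1 : j + 1 < lam.rowLen 0 + 1
  · rw [dif_pos h1, dif_pos (by omega)]
    have hb := hr ⟨j + 1, h1⟩
    have hlohi := Pieri.lo_le_hi n lam hle (j + 1)
    have hhi : Pieri.hiF n lam (j + 1) = lam.colLen j := by
      unfold Pieri.hiF
      rw [if_neg (by omega)]
      simp
    simp only at hb
    omega
  · rw [dif_neg h1]
    omega

set_option maxHeartbeats 1000000 in
lemma final_bij (n : ℕ) (lam : YoungDiagram) (hle : lam.colLen 0 ≤ n) (k : ℕ)
    (hfin : Set.Finite {nu : YoungDiagram | IsVStrip lam nu ∧ nu.card = lam.card + k}) :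
    ∑ r ∈ (Fintype.piFinset (fun i : Fin (lam.rowLen 0 + 1) =>
        Finset.range (Pieri.hiF n lam i + 1 - lam.colLen i))).filter
          (fun r => (∑ i, r i) = k),
      Matrix.det (Matrix.of fun i j : Fin (lam.rowLen 0 + 1) =>
        Esym n ((lam.colLen i : ℤ) + r i - (i : ℕ) + (j : ℕ)))
    = ∑ nu ∈ hfin.toFinset.filter (fun nu => nu.colLen 0 ≤ Pieri.Nbig n lam),
        schurPoly n nu := by
  classical
  have hNdef : Pieri.Nbig n lam = n + lam.rowLen 0 + 1 := rfl
  -- membership unfolding for the r-side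
  have hmem_s : ∀ r, r ∈ (Fintype.piFinset (fun i : Fin (lam.rowLen 0 + 1) =>
      Finset.range (Pieri.hiF n lam i + 1 - lam.colLen i))).filter
        (fun r => (∑ i, r i) = k) ↔
      (∀ i : Fin (lam.rowLen 0 + 1), r i < Pieri.hiF n lam i + 1 - lam.colLen i) ∧
        (∑ i, r i) = k := by
    intro r
    rw [Finset.mem_filter, Fintype.mem_piFinset]
    simp only [Finset.mem_range]
  -- membership unfolding for the nu-side
  have hmem_t : ∀ nu, nu ∈ hfin.toFinset.filter
      (fun nu => nu.colLen 0 ≤ Pieri.Nbig n lam) ↔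
      (IsVStrip lam nu ∧ nu.card = lam.card + k) ∧ nu.colLen 0 ≤ Pieri.Nbig n lam := by
    intro nu
    rw [Finset.mem_filter, Set.Finite.mem_toFinset, Set.mem_setOf_eq]
  refine Finset.sum_bij'
    (i := fun r hr => ofColLens (gfun lam r)
      (gfun_anti n lam hle fun i => ((hmem_s r).1 hr).1 i) (lam.rowLen 0 + 1)
      (gfun_zero lam r))
    (j := fun nu _ => fun i : Fin (lam.rowLen 0 + 1) => nu.colLen i - lam.colLen i)
    ?_ ?_ ?_ ?_ ?_
  -- hi : image of forward map lies in t
  · intro r hr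
    obtain ⟨hrb, hrs⟩ := (hmem_s r).1 hr
    set nu := ofColLens (gfun lam r)
      (gfun_anti n lam hle fun i => hrb i) (lam.rowLen 0 + 1) (gfun_zero lam r) with hnu
    have hcol : ∀ j, nu.colLen j = gfun lam r j := fun j => colLen_ofColLens
    rw [hmem_t]
    have hcolLam0 : ∀ j, lam.rowLen 0 + 1 ≤ j → lam.colLen j = 0 :=
      fun j hj => colLen_eq_zero_of (by omega)
    refine ⟨⟨isVStrip_iff.2 ⟨?_, ?_⟩, ?_⟩, ?_⟩
    · intro j
      rw [hcol]
      unfold gfun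
      by_cases h1 : j < lam.rowLen 0 + 1
      · rw [dif_pos h1]; omega
      · rw [dif_neg h1, hcolLam0 j (by omega)]
    · intro j
      rw [hcol]
      unfold gfun
      by_cases h1 : j + 1 < lam.rowLen 0 + 1
      · rw [dif_pos h1]
        have hb := hrb ⟨j + 1, h1⟩
        have hlohi := Pieri.lo_le_hi n lam hle (j + 1)
        have hhi : Pieri.hiF n lam (j + 1) = lam.colLen j := by
          unfold Pieri.hiF
          rw [if_neg (by omega)]
          simp
        simp only at hb
        omega
      · rw [dif_neg h1]
        omega
    · -- card
      rw [young_card_eq (M := lam.rowLen 0 + 1) (rowLen_ofColLens_le)]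
      rw [← Fin.sum_univ_eq_sum_range (fun j => nu.colLen j) (lam.rowLen 0 + 1)]
      have : ∀ i : Fin (lam.rowLen 0 + 1), nu.colLen i = lam.colLen i + r i := by
        intro i
        rw [hcol]
        unfold gfun
        rw [dif_pos i.isLt, Fin.eta]
      rw [Finset.sum_congr rfl fun i _ => this i, Finset.sum_add_distrib]
      rw [Fin.sum_univ_eq_sum_range (fun j => lam.colLen j) (lam.rowLen 0 + 1)]
      rw [← young_card_eq (M := lam.rowLen 0 + 1) (by omega), hrs]
    · -- colLen 0 bound
      rw [hcol]
      unfold gfun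
      rw [dif_pos (by omega : 0 < lam.rowLen 0 + 1)]
      have hb := hrb ⟨0, by omega⟩
      have hlohi := Pieri.lo_le_hi n lam hle 0
      have hhi : Pieri.hiF n lam 0 = Pieri.Nbig n lam := by
        unfold Pieri.hiF
        rw [if_pos rfl]
      simp only at hb
      omega
  -- hj : inverse map lands in s
  · intro nu hnu
    obtain ⟨⟨hstrip, hcard⟩, hN0⟩ := (hmem_t nu).1 hnu
    obtain ⟨hmono, hinter⟩ := isVStrip_iff.1 hstrip
    have hrow : nu.rowLen 0 ≤ lam.rowLen 0 + 1 := hstrip.2 0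
    rw [hmem_s]
    constructor
    · intro i
      show nu.colLen (i : ℕ) - lam.colLen (i : ℕ)
        < Pieri.hiF n lam (i : ℕ) + 1 - lam.colLen (i : ℕ)
      have h1 := hmono (i : ℕ)
      have h2 : nu.colLen (i : ℕ) ≤ Pieri.hiF n lam (i : ℕ) := by
        unfold Pieri.hiF
        by_cases h0 : (i : ℕ) = 0
        · rw [if_pos h0, h0]
          exact hN0
        · rw [if_neg h0]
          have := hinter ((i : ℕ) - 1)
          have he : (i : ℕ) - 1 + 1 = (i : ℕ) := by omega
          rw [he] at this
          exact this
      omega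
    · show (∑ i : Fin (lam.rowLen 0 + 1), (nu.colLen (i : ℕ) - lam.colLen (i : ℕ))) = k
      have hsum : ∀ i : Fin (lam.rowLen 0 + 1), lam.colLen i ≤ nu.colLen i :=
        fun i => hmono _
      rw [Finset.sum_tsub_distrib _ (fun i _ => hsum i)]
      rw [Fin.sum_univ_eq_sum_range (fun j => nu.colLen j) (lam.rowLen 0 + 1),
        Fin.sum_univ_eq_sum_range (fun j => lam.colLen j) (lam.rowLen 0 + 1)]
      rw [← young_card_eq (M := lam.rowLen 0 + 1) (by omega),
        ← young_card_eq (M := lam.rowLen 0 + 1) (by omega)]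
      omega
  -- left_inv
  · intro r hr
    funext i
    show (ofColLens (gfun lam r)
        (gfun_anti n lam hle fun i => ((hmem_s r).1 hr).1 i) (lam.rowLen 0 + 1)
        (gfun_zero lam r)).colLen (i : ℕ) - lam.colLen (i : ℕ) = r i
    rw [colLen_ofColLens]
    unfold gfun
    rw [dif_pos i.isLt, Fin.eta]
    omega
  -- right_inv
  · intro nu hnu
    obtain ⟨⟨hstrip, hcard⟩, hN0⟩ := (hmem_t nu).1 hnu
    obtain ⟨hmono, _⟩ := isVStrip_iff.1 hstrip
    have hrow : nu.rowLen 0 ≤ lam.rowLen 0 + 1 := hstrip.2 0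
    refine youngExt fun j => ?_
    rw [colLen_ofColLens]
    unfold gfun
    by_cases h1 : j < lam.rowLen 0 + 1
    · rw [dif_pos h1]
      have := hmono j
      simp only
      omega
    · rw [dif_neg h1]
      rw [colLen_eq_zero_of (mu := nu) (by omega)]
  -- values
  · intro r hr
    obtain ⟨hrb, _⟩ := (hmem_s r).1 hr
    set nu := ofColLens (gfun lam r)
      (gfun_anti n lam hle fun i => hrb i) (lam.rowLen 0 + 1) (gfun_zero lam r) with hnu
    have hrownu : nu.rowLen 0 ≤ lam.rowLen 0 + 1 := rowLen_ofColLens_le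
    rw [← jacobiTrudi_eq_schurPoly n nu hrownu]
    unfold jacobiTrudi
    congr 1
    refine Matrix.ext fun i j => ?_
    simp only [Matrix.of_apply]
    congr 1
    have hcol : nu.colLen (i : ℕ) = lam.colLen i + r i := by
      have : nu.colLen (i : ℕ) = gfun lam r (i : ℕ) := colLen_ofColLens
      rw [this]
      unfold gfun
      rw [dif_pos i.isLt, Fin.eta]
    rw [hcol]
    push_cast
    ring

end PieriBij
/-- Pieri rule: `s_lam * e_k` is the sum of `s_nu` over partitions `nu` with
`nu/lam` a vertical strip of `k` boxes. -/
theorem stmt1 (n k : ℕ) (hk : 0 < k) (lam : YoungDiagram) :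
    schurPoly n lam * MvPolynomial.esymm (Fin n) ℚ k =
      ∑ᶠ nu ∈ {nu : YoungDiagram | IsVStrip lam nu ∧ nu.card = lam.card + k},
        schurPoly n nu := by
  classical
  by_cases hle : lam.colLen 0 ≤ n
  · have hfin := vstrip_finite lam k
    rw [finsum_mem_eq_finite_toFinset_sum _ hfin]
    rw [← Finset.sum_filter_add_sum_filter_not hfin.toFinset
      (fun nu => nu.colLen 0 ≤ Pieri.Nbig n lam) (fun nu => schurPoly n nu)]
    have hbad : ∑ nu ∈ hfin.toFinset.filter
        (fun nu => ¬ nu.colLen 0 ≤ Pieri.Nbig n lam), schurPoly n nu = 0 := by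
      refine Finset.sum_eq_zero fun nu hnu => ?_
      rw [Finset.mem_filter] at hnu
      refine schurPoly_eq_zero ?_
      have hN : Pieri.Nbig n lam = n + lam.rowLen 0 + 1 := rfl
      have := hnu.2
      omega
    rw [hbad, add_zero, mul_comm, Pieri.key n lam hle k, final_bij n lam hle k hfin]
  · push_neg at hle
    rw [schurPoly_eq_zero hle, zero_mul]
    symm
    refine finsum_mem_of_eqOn_zero ?_
    intro nu hnu
    refine schurPoly_eq_zero ?_
    have := (youngLE_iff.1 hnu.1.1) 0
    omega
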